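/- Let (Ω, μ) be a finite measure space, N ∈ L²(μ) with N ≥ 0 a.e., α_t > 0, and let α ≥ 0, β ≥ 0, D ≥ 0, b > 0, R₀ ≥ 1; for p ≥ 0 set s(p) = (b + p)/(b·R₀ + p) and S_f(p) = exp(−α·D·s(p) − β·D²·s(p)²), and define TCP(u) = exp(−∫_Ω N(x)·S_f(u(x)/α_t) dμ(x)). Then for all u, v ∈ L²(μ) with u ≥ 0 and v ≥ 0 a.e., |TCP(u) − TCP(v)| ≤ (1/α_t)·(α·D + 2·β·D²)·((R₀ − 1)/(b·R₀²))·‖N‖_{L²(μ)}·‖u − v‖_{L²(μ)}. In particular, the Tumor Control Probability is a Lipschitz continuous functional of the tissue oxygen concentration with respect to the L² norm on the cone L²₊(μ) of nonnegative L² functions. -/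

import Mathlib

open MeasureTheory

/-- `exp` is 1-Lipschitz on the nonpositive reals. -/
lemma exp_lip_aux {x y : ℝ} (hx : x ≤ 0) (hy : y ≤ 0) :
    |Real.exp x - Real.exp y| ≤ |x - y| := by
  wlog h : y ≤ x generalizing x y
  · rw [abs_sub_comm, abs_sub_comm x y]; exact this hy hx (le_of_not_ge h)
  rw [abs_of_nonneg (sub_nonneg.2 (Real.exp_le_exp.2 h)), abs_of_nonneg (sub_nonneg.2 h)]
  have h1 : (y - x) + 1 ≤ Real.exp (y - x) := Real.add_one_le_exp _
  have h2 : Real.exp x ≤ 1 := by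
    simpa using Real.exp_le_exp.2 hx
  have h3 : Real.exp x * Real.exp (y - x) = Real.exp y := by
    rw [← Real.exp_add]; ring_nf
  nlinarith [Real.exp_pos x]

set_option maxHeartbeats 1000000 in
/-- The Tumor Control Probability
`TCP(u) = exp(−∫ N(x)·S_f(u(x)/α_t) dμ)` is Lipschitz continuous with respect
to the `L²` norm on the cone `L²₊(μ)` of nonnegative `L²` functions, with
constant `(1/α_t)·(α·D + 2·β·D²)·((R₀ − 1)/(b·R₀²))·‖N‖_{L²(μ)}`. -/
theorem TCP_lipschitz
    {Ω : Type*} [MeasurableSpace Ω] (μ : Measure Ω) [IsFiniteMeasure μ]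
    (N : Ω → ℝ) (hN : MemLp N 2 μ) (hN0 : 0 ≤ᵐ[μ] N)
    (αt : ℝ) (hαt : 0 < αt)
    (α β D b R₀ : ℝ) (hα : 0 ≤ α) (hβ : 0 ≤ β) (hD : 0 ≤ D)
    (hb : 0 < b) (hR₀ : 1 ≤ R₀) :
    let s : ℝ → ℝ := fun p => (b + p) / (b * R₀ + p)
    let Sf : ℝ → ℝ := fun p => Real.exp (-(α * D * s p) - β * D ^ 2 * s p ^ 2)
    let TCP : (Ω → ℝ) → ℝ := fun u => Real.exp (-∫ x, N x * Sf (u x / αt) ∂μ)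
    ∀ u v : Ω → ℝ, MemLp u 2 μ → MemLp v 2 μ →
      (0 ≤ᵐ[μ] u) → (0 ≤ᵐ[μ] v) →
      |TCP u - TCP v| ≤
        (1 / αt) * (α * D + 2 * β * D ^ 2) * ((R₀ - 1) / (b * R₀ ^ 2)) *
          (eLpNorm N 2 μ).toReal * (eLpNorm (u - v) 2 μ).toReal := by
  intro s Sf TCP u v hu hv hu0 hv0
  set L : ℝ := (α * D + 2 * β * D ^ 2) * ((R₀ - 1) / (b * R₀ ^ 2)) with hLdef
  have hR₀0 : (0:ℝ) < R₀ := lt_of_lt_of_le one_pos hR₀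
  have hL : 0 ≤ L := by
    apply mul_nonneg (by positivity)
    exact div_nonneg (by linarith) (by positivity)
  -- basic facts about s
  have hs_mem : ∀ p : ℝ, 0 ≤ p → 0 ≤ s p ∧ s p ≤ 1 := by
    intro p hp
    have hd : 0 < b * R₀ + p := by nlinarith
    constructor
    · exact div_nonneg (by linarith) hd.le
    · rw [div_le_one hd]; nlinarith
  have hSf_pos : ∀ p : ℝ, 0 < Sf p := fun p => Real.exp_pos _
  have hSf_le_one : ∀ p : ℝ, 0 ≤ p → Sf p ≤ 1 := by
    intro p hp
    obtain ⟨h0, h1⟩ := hs_mem p hp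
    have hexp0 : -(α * D * s p) - β * D ^ 2 * s p ^ 2 ≤ 0 := by
      nlinarith [mul_nonneg (mul_nonneg hα hD) h0,
        mul_nonneg (mul_nonneg hβ (sq_nonneg D)) (sq_nonneg (s p))]
    calc Sf p ≤ Real.exp 0 := Real.exp_le_exp.2 hexp0
      _ = 1 := Real.exp_zero
  -- pointwise Lipschitz bound for Sf on [0, ∞)
  have hkey : ∀ p q : ℝ, 0 ≤ p → 0 ≤ q → |Sf p - Sf q| ≤ L * |p - q| := by
    intro p q hp hq
    have hdp : 0 < b * R₀ + p := by nlinarith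
    have hdq : 0 < b * R₀ + q := by nlinarith
    obtain ⟨hsp0, hsp1⟩ := hs_mem p hp
    obtain ⟨hsq0, hsq1⟩ := hs_mem q hq
    -- lipschitz bound on s
    have hs : |s p - s q| ≤ (R₀ - 1) / (b * R₀ ^ 2) * |p - q| := by
      have key : s p - s q = (b * (R₀ - 1) * (p - q)) / ((b * R₀ + p) * (b * R₀ + q)) := by
        show (b + p) / (b * R₀ + p) - (b + q) / (b * R₀ + q) = _
        field_simp
        ring
      rw [key, abs_div, abs_mul, abs_mul, abs_of_pos hb,
        abs_of_nonneg (by linarith : (0:ℝ) ≤ R₀ - 1), abs_of_pos (mul_pos hdp hdq),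
        div_le_iff₀ (mul_pos hdp hdq)]
      have hc : (R₀ - 1) / (b * R₀ ^ 2) * ((b * R₀) * (b * R₀)) = b * (R₀ - 1) := by
        field_simp
      have hcnn : 0 ≤ (R₀ - 1) / (b * R₀ ^ 2) := div_nonneg (by linarith) (by positivity)
      have hden : (b * R₀) * (b * R₀) ≤ (b * R₀ + p) * (b * R₀ + q) := by
        nlinarith [mul_nonneg hp hq, mul_nonneg (mul_pos hb hR₀0).le hp,
          mul_nonneg (mul_pos hb hR₀0).le hq]
      have hmul := mul_le_mul_of_nonneg_left hden
        (mul_nonneg hcnn (abs_nonneg (p - q)))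
      have hc2 : (R₀ - 1) / (b * R₀ ^ 2) * (b * R₀ * (b * R₀)) * |p - q|
          = b * (R₀ - 1) * |p - q| := by rw [hc]
      nlinarith [hmul, hc2]
    -- from s to Sf
    have hgp : 0 ≤ α * D * s p + β * D ^ 2 * s p ^ 2 :=
      add_nonneg (mul_nonneg (mul_nonneg hα hD) hsp0)
        (mul_nonneg (mul_nonneg hβ (sq_nonneg D)) (sq_nonneg (s p)))
    have hgq : 0 ≤ α * D * s q + β * D ^ 2 * s q ^ 2 :=
      add_nonneg (mul_nonneg (mul_nonneg hα hD) hsq0)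
        (mul_nonneg (mul_nonneg hβ (sq_nonneg D)) (sq_nonneg (s q)))
    have hexp := exp_lip_aux (x := -(α * D * s p) - β * D ^ 2 * s p ^ 2)
      (y := -(α * D * s q) - β * D ^ 2 * s q ^ 2) (by linarith) (by linarith)
    have hg : |(-(α * D * s p) - β * D ^ 2 * s p ^ 2) - (-(α * D * s q) - β * D ^ 2 * s q ^ 2)|
        ≤ (α * D + 2 * β * D ^ 2) * |s p - s q| := by
      have hfac : (-(α * D * s p) - β * D ^ 2 * s p ^ 2) - (-(α * D * s q) - β * D ^ 2 * s q ^ 2)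
          = -((α * D + β * D ^ 2 * (s p + s q)) * (s p - s q)) := by ring
      rw [hfac, abs_neg, abs_mul]
      apply mul_le_mul_of_nonneg_right _ (abs_nonneg _)
      have hb2 : 0 ≤ β * D ^ 2 := mul_nonneg hβ (sq_nonneg D)
      have hb3 : 0 ≤ β * D ^ 2 * (s p + s q) := mul_nonneg hb2 (by linarith)
      rw [abs_of_nonneg (by nlinarith [mul_nonneg (mul_nonneg hα hD) hsp0] :
        (0:ℝ) ≤ α * D + β * D ^ 2 * (s p + s q))]
      nlinarith [mul_le_mul_of_nonneg_left (by linarith : s p + s q ≤ 2) hb2,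
        mul_nonneg hα hD]
    calc |Sf p - Sf q| ≤ |(-(α * D * s p) - β * D ^ 2 * s p ^ 2)
          - (-(α * D * s q) - β * D ^ 2 * s q ^ 2)| := hexp
      _ ≤ (α * D + 2 * β * D ^ 2) * |s p - s q| := hg
      _ ≤ (α * D + 2 * β * D ^ 2) * ((R₀ - 1) / (b * R₀ ^ 2) * |p - q|) := by
          exact mul_le_mul_of_nonneg_left hs
            (add_nonneg (mul_nonneg hα hD)
              (mul_nonneg (mul_nonneg (by norm_num : (0:ℝ) ≤ 2) hβ) (sq_nonneg D)))
      _ = L * |p - q| := by rw [hLdef]; ring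
  -- measurability of Sf
  have hSf_meas : Measurable Sf := by
    apply Real.measurable_exp.comp
    apply Measurable.sub
    · exact (measurable_const.mul ((measurable_const.add measurable_id).div
        (measurable_const.add measurable_id))).neg
    · exact measurable_const.mul (((measurable_const.add measurable_id).div
        (measurable_const.add measurable_id)).pow measurable_const)
  have hN1 : Integrable N μ := hN.integrable (by norm_num)
  -- integrability and nonnegativity of the TCP integrand
  have main : ∀ w : Ω → ℝ, MemLp w 2 μ → (0 ≤ᵐ[μ] w) →
      Integrable (fun x => N x * Sf (w x / αt)) μ ∧
        0 ≤ ∫ x, N x * Sf (w x / αt) ∂μ := by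
    intro w hw hw0
    have hmeas : AEStronglyMeasurable (fun x => N x * Sf (w x / αt)) μ := by
      exact hN.1.mul ((hSf_meas.comp_aemeasurable
        ((hw.1.aemeasurable).div_const αt)).aestronglyMeasurable)
    have hint : Integrable (fun x => N x * Sf (w x / αt)) μ := by
      apply Integrable.mono' hN1.abs hmeas
      filter_upwards [hw0] with x hx
      rw [Real.norm_eq_abs, abs_mul]
      have h1 : Sf (w x / αt) ≤ 1 := hSf_le_one _ (div_nonneg hx hαt.le)
      have h2 : 0 < Sf (w x / αt) := hSf_pos _
      calc |N x| * |Sf (w x / αt)| ≤ |N x| * 1 := by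
            apply mul_le_mul_of_nonneg_left _ (abs_nonneg _)
            rw [abs_of_pos h2]; exact h1
        _ = |N x| := mul_one _
    refine ⟨hint, ?_⟩
    apply integral_nonneg_of_ae
    filter_upwards [hN0] with x hx
    exact mul_nonneg hx (hSf_pos _).le
  obtain ⟨hIu, hAu⟩ := main u hu hu0
  obtain ⟨hIv, hAv⟩ := main v hv hv0
  set A := ∫ x, N x * Sf (u x / αt) ∂μ with hA
  set B := ∫ x, N x * Sf (v x / αt) ∂μ with hB
  -- Cauchy–Schwarz in L²
  have huv : MemLp (u - v) 2 μ := hu.sub hv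
  set F : Lp ℝ 2 μ := (hN.norm).toLp (fun x => ‖N x‖) with hF
  set G : Lp ℝ 2 μ := (huv.norm).toLp (fun x => ‖(u - v) x‖) with hG
  have hIuv : Integrable (fun x => ‖N x‖ * ‖u x - v x‖) μ := by
    apply (L2.integrable_inner (𝕜 := ℝ) F G).congr
    filter_upwards [MemLp.coeFn_toLp (hN.norm), MemLp.coeFn_toLp (huv.norm)] with x h1 h2
    simp only [RCLike.inner_apply, conj_trivial, h1, h2, Pi.sub_apply]
    rw [hF, hG, h1, h2, Pi.sub_apply]; ring
  have CS : ∫ x, ‖N x‖ * ‖u x - v x‖ ∂μ ≤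
      (eLpNorm N 2 μ).toReal * (eLpNorm (u - v) 2 μ).toReal := by
    have h1 : ∫ x, ‖N x‖ * ‖u x - v x‖ ∂μ = @inner ℝ _ _ F G := by
      rw [L2.inner_def]
      apply integral_congr_ae
      filter_upwards [MemLp.coeFn_toLp (hN.norm), MemLp.coeFn_toLp (huv.norm)] with x h1 h2
      simp only [RCLike.inner_apply, conj_trivial, h1, h2, Pi.sub_apply]
      rw [hF, hG, h1, h2, Pi.sub_apply]; ring
    rw [h1]
    calc @inner ℝ _ _ F G ≤ ‖F‖ * ‖G‖ := real_inner_le_norm F G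
      _ = (eLpNorm N 2 μ).toReal * (eLpNorm (u - v) 2 μ).toReal := by
          rw [hF, hG, Lp.norm_toLp, Lp.norm_toLp, eLpNorm_norm, eLpNorm_norm]
  -- pointwise bound on the integrand difference
  have hptw : ∀ᵐ x ∂μ, |N x * Sf (u x / αt) - N x * Sf (v x / αt)| ≤
      (L / αt) * (‖N x‖ * ‖u x - v x‖) := by
    filter_upwards [hN0, hu0, hv0] with x hNx hux hvx
    have h1 := hkey (u x / αt) (v x / αt) (div_nonneg hux hαt.le) (div_nonneg hvx hαt.le)
    have h2 : u x / αt - v x / αt = (u x - v x) / αt := by ring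
    rw [h2] at h1
    calc |N x * Sf (u x / αt) - N x * Sf (v x / αt)|
        = N x * |Sf (u x / αt) - Sf (v x / αt)| := by
          rw [← mul_sub, abs_mul, abs_of_nonneg hNx]
      _ ≤ N x * (L * |(u x - v x) / αt|) := mul_le_mul_of_nonneg_left h1 hNx
      _ = (L / αt) * (‖N x‖ * ‖u x - v x‖) := by
          rw [Real.norm_eq_abs, Real.norm_eq_abs, abs_of_nonneg hNx, abs_div,
            abs_of_pos hαt]
          ring
  -- bound on the difference of integrals
  have hABdiff : |A - B| ≤ (L / αt) *
      ((eLpNorm N 2 μ).toReal * (eLpNorm (u - v) 2 μ).toReal) := by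
    calc |A - B| = |∫ x, (N x * Sf (u x / αt) - N x * Sf (v x / αt)) ∂μ| := by
          rw [integral_sub hIu hIv]
      _ ≤ ∫ x, |N x * Sf (u x / αt) - N x * Sf (v x / αt)| ∂μ := by
          simpa [Real.norm_eq_abs] using
            norm_integral_le_integral_norm (fun x => N x * Sf (u x / αt) - N x * Sf (v x / αt))
      _ ≤ ∫ x, (L / αt) * (‖N x‖ * ‖u x - v x‖) ∂μ := by
          apply integral_mono_of_nonneg
          · filter_upwards with x; exact abs_nonneg _
          · exact hIuv.const_mul _
          · exact hptw
      _ = (L / αt) * ∫ x, ‖N x‖ * ‖u x - v x‖ ∂μ := integral_const_mul _ _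
      _ ≤ (L / αt) * ((eLpNorm N 2 μ).toReal * (eLpNorm (u - v) 2 μ).toReal) := by
          apply mul_le_mul_of_nonneg_left CS (div_nonneg hL hαt.le)
  -- conclude via the exp Lipschitz bound
  have hfinal : |TCP u - TCP v| ≤ |A - B| := by
    have := exp_lip_aux (x := -A) (y := -B) (neg_nonpos.2 hAu) (neg_nonpos.2 hAv)
    calc |TCP u - TCP v| = |Real.exp (-A) - Real.exp (-B)| := rfl
      _ ≤ |(-A) - (-B)| := this
      _ = |A - B| := by rw [abs_sub_comm]; congr 1; ring
  calc |TCP u - TCP v| ≤ |A - B| := hfinal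
    _ ≤ (L / αt) * ((eLpNorm N 2 μ).toReal * (eLpNorm (u - v) 2 μ).toReal) := hABdiff
    _ = (1 / αt) * (α * D + 2 * β * D ^ 2) * ((R₀ - 1) / (b * R₀ ^ 2)) *
          (eLpNorm N 2 μ).toReal * (eLpNorm (u - v) 2 μ).toReal := by
        rw [hLdef]; ring
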